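/- Let Ω be a connected open subset of ℂ and let T = [[T_0, S],[0, T_1]] be an operator in 𝓕B_2(Ω). Then T is strongly irreducible if and only if there exists no bounded operator X : H_1 → H_0 such that S = T_0 X − X T_1 (equivalently, S is not in the range of σ_{T_0,T_1}). -/

import Mathlib

noncomputable section

open ContinuousLinearMap
open scoped InnerProductSpace

/-- The Cowen–Douglas class `B_n(Ω)`: `Ω ⊆ σ(T)`, `T - w` is surjective for every `w ∈ Ω`,
the closed linear span of the kernels `ker (T - w)`, `w ∈ Ω`, is all of `H`, and
`dim ker (T - w) = n` for every `w ∈ Ω`. -/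
def CowenDouglas {H : Type*} [NormedAddCommGroup H] [InnerProductSpace ℂ H]
    (n : ℕ) (Ω : Set ℂ) (T : H →L[ℂ] H) : Prop :=
  Ω ⊆ spectrum ℂ T ∧
  (∀ w ∈ Ω, Function.Surjective (T - w • (1 : H →L[ℂ] H))) ∧
  (⨆ w ∈ Ω, LinearMap.ker ((T - w • (1 : H →L[ℂ] H) : H →L[ℂ] H) : H →ₗ[ℂ] H)).topologicalClosure = ⊤ ∧
  (∀ w ∈ Ω, Module.finrank ℂ (LinearMap.ker ((T - w • (1 : H →L[ℂ] H) : H →L[ℂ] H) : H →ₗ[ℂ] H)) = n)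

/-- The block operator `[[T₀, S], [0, T₁]]` acting on the Hilbert space orthogonal direct
sum `H₀ ⊕ H₁` (realized as the `ℓ²`-product `WithLp 2 (H₀ × H₁)`). -/
def blockOp₂ {H₀ H₁ : Type*} [NormedAddCommGroup H₀] [NormedSpace ℂ H₀]
    [NormedAddCommGroup H₁] [NormedSpace ℂ H₁]
    (T₀ : H₀ →L[ℂ] H₀) (S : H₁ →L[ℂ] H₀) (T₁ : H₁ →L[ℂ] H₁) :
    WithLp 2 (H₀ × H₁) →L[ℂ] WithLp 2 (H₀ × H₁) :=
  ((WithLp.prodContinuousLinearEquiv 2 ℂ H₀ H₁).symm : H₀ × H₁ →L[ℂ] WithLp 2 (H₀ × H₁)) ∘L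
    ((T₀ ∘L fst ℂ H₀ H₁ + S ∘L snd ℂ H₀ H₁).prod (T₁ ∘L snd ℂ H₀ H₁)) ∘L
    ((WithLp.prodContinuousLinearEquiv 2 ℂ H₀ H₁) : WithLp 2 (H₀ × H₁) →L[ℂ] H₀ × H₁)

set_option linter.unusedSectionVars false
set_option linter.unusedVariables false

open Function

section Kleinecke
variable {R : Type*} [Ring R]

private def dOp (a : R) (x : R) : R := a * x - x * a

private lemma dOp_add (a x y : R) : dOp a (x + y) = dOp a x + dOp a y := by
  simp only [dOp]; noncomm_ring

private lemma dOp_zero (a : R) : dOp a 0 = 0 := by simp [dOp]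

private lemma dOp_mul (a x y : R) : dOp a (x * y) = dOp a x * y + x * dOp a y := by
  simp only [dOp]; noncomm_ring

private lemma dOp_nsmul (a : R) (n : ℕ) (x : R) : dOp a (n • x) = n • dOp a x := by
  simp only [dOp, mul_smul_comm, smul_mul_assoc, smul_sub]

private lemma dOp_iter_zero (a : R) (n : ℕ) : (dOp a)^[n] 0 = 0 := by
  induction n with
  | zero => rfl
  | succ n ih => rw [iterate_succ_apply, dOp_zero, ih]

private lemma dOp_iter_one (a : R) (n : ℕ) (hn : n ≠ 0) : (dOp a)^[n] 1 = 0 := by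
  obtain ⟨m, rfl⟩ := Nat.exists_eq_succ_of_ne_zero hn
  rw [iterate_succ_apply]
  have : dOp a (1 : R) = 0 := by simp [dOp]
  rw [this, dOp_iter_zero]

variable {a b : R}

private lemma dOp_iter_mul_left (hc : a * (a*b - b*a) = (a*b - b*a) * a)
    (k : ℕ) (hk : k ≠ 0) (y : R) :
    (dOp a)^[k] (b * y)
      = b * (dOp a)^[k] y + k • ((a*b - b*a) * (dOp a)^[k-1] y) := by
  have hdc : dOp a (a*b - b*a) = 0 := by
    simp only [dOp, hc.symm, sub_eq_zero]
  have hdb : dOp a b = a*b - b*a := rfl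
  induction k with
  | zero => exact absurd rfl hk
  | succ k ih =>
    rcases Nat.eq_zero_or_pos k with hk0 | hk0
    · subst hk0
      simp only [zero_add, iterate_one, one_smul, Nat.sub_self, iterate_zero, id_eq]
      rw [dOp_mul, hdb]
      exact add_comm _ _
    · have hkne : k ≠ 0 := hk0.ne'
      rw [iterate_succ_apply', ih hkne, dOp_add, dOp_mul, dOp_nsmul, dOp_mul, hdc,
        show dOp a ((dOp a)^[k] y) = (dOp a)^[k+1] y from (iterate_succ_apply' _ _ _).symm,
        show dOp a ((dOp a)^[k-1] y) = (dOp a)^[k-1+1] y from (iterate_succ_apply' _ _ _).symm,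
        Nat.sub_add_cancel hk0, hdb]
      have h1 : k + 1 - 1 = k := rfl
      rw [h1, zero_mul, zero_add, succ_nsmul]
      abel

private lemma dOp_iter_pow_eq_zero (hc : a * (a*b - b*a) = (a*b - b*a) * a) :
    ∀ m k : ℕ, m < k → (dOp a)^[k] (b ^ m) = 0 := by
  intro m
  induction m with
  | zero => intro k hk; simpa using dOp_iter_one a k hk.ne'
  | succ m ih =>
    intro k hk
    have hkne : k ≠ 0 := by omega
    rw [pow_succ', dOp_iter_mul_left hc k hkne, ih k (by omega), ih (k-1) (by omega)]
    simp

private lemma dOp_iter_pow (hc : a * (a*b - b*a) = (a*b - b*a) * a) :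
    ∀ n : ℕ, (dOp a)^[n] (b ^ n) = n.factorial • ((a*b - b*a) ^ n) := by
  intro n
  induction n with
  | zero => simp
  | succ n ih =>
    rw [pow_succ', dOp_iter_mul_left hc (n+1) (Nat.succ_ne_zero n),
      show n + 1 - 1 = n from rfl, dOp_iter_pow_eq_zero hc n (n+1) (by omega), ih]
    rw [mul_zero, zero_add, mul_smul_comm, ← pow_succ', smul_smul, Nat.factorial_succ]

end Kleinecke
set_option linter.unusedSectionVars false

open Function ContinuousLinearMap Metric

section Sections

variable {H : Type*} [NormedAddCommGroup H] [InnerProductSpace ℂ H] [CompleteSpace H]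

/-- A surjective bounded operator on a Hilbert space has a bounded right inverse. -/
private lemma exists_right_inverse (T : H →L[ℂ] H) (hsurj : Function.Surjective T) :
    ∃ R : H →L[ℂ] H, T ∘L R = 1 := by
  set K : Submodule ℂ H := LinearMap.ker (T : H →ₗ[ℂ] H) with hK
  have hKclosed : IsClosed (K : Set H) := isClosed_ker T
  haveI : CompleteSpace K := hKclosed.completeSpace_coe
  set A : Kᗮ →L[ℂ] H := T ∘L Kᗮ.subtypeL with hA
  have hker : LinearMap.ker (A : Kᗮ →ₗ[ℂ] H) = ⊥ := by
    rw [Submodule.eq_bot_iff]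
    rintro ⟨x, hx⟩ hAx
    have hxK : x ∈ K := by
      exact (by simpa [hA] using hAx : T x = 0)
    have hmem : x ∈ K ⊓ Kᗮ := ⟨hxK, hx⟩
    rw [K.orthogonal_disjoint.eq_bot] at hmem
    simp only [Submodule.mem_bot] at hmem
    simp [hmem]
  have hrange : LinearMap.range (A : Kᗮ →ₗ[ℂ] H) = ⊤ := by
    rw [Submodule.eq_top_iff']
    intro y
    obtain ⟨x, hx⟩ := hsurj y
    have hx' : x ∈ K ⊔ Kᗮ := by
      rw [Submodule.sup_orthogonal_of_hasOrthogonalProjection]; trivial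
    obtain ⟨k, hk, k', hk', rfl⟩ := Submodule.mem_sup.mp hx'
    refine ⟨⟨k', hk'⟩, ?_⟩
    have hTk : T k = 0 := hk
    simp only [hA, ContinuousLinearMap.comp_apply, Submodule.subtypeL_apply] at *
    rw [← hx, map_add, hTk, zero_add]
    rfl
  let e := ContinuousLinearEquiv.ofBijective A hker hrange
  refine ⟨Kᗮ.subtypeL ∘L (e.symm : H →L[ℂ] Kᗮ), ?_⟩
  ext y
  have : A (e.symm y) = y := e.apply_symm_apply y
  simpa [hA] using this

variable {T : H →L[ℂ] H} {w₀ : ℂ} {R : H →L[ℂ] H}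

/-- the local holomorphic section through `x₀` -/
private noncomputable def secv (R : H →L[ℂ] H) (w₀ : ℂ) (x₀ : H) (w : ℂ) : H :=
  Ring.inverse ((1 : H →L[ℂ] H) - (w - w₀) • R) x₀

private lemma secv_isUnit (hw : w ∈ ball w₀ (‖R‖ + 1)⁻¹) :
    IsUnit ((1 : H →L[ℂ] H) - (w - w₀) • R) := by
  have hR1 : (0:ℝ) < ‖R‖ + 1 := by positivity
  have : ‖(w - w₀) • R‖ < 1 := by
    rw [norm_smul]
    calc ‖w - w₀‖ * ‖R‖ ≤ ‖w - w₀‖ * (‖R‖ + 1) := by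
          apply mul_le_mul_of_nonneg_left (by linarith) (norm_nonneg _)
      _ < (‖R‖ + 1)⁻¹ * (‖R‖ + 1) := by
          apply mul_lt_mul_of_pos_right ?_ hR1
          simpa [dist_eq_norm] using hw
      _ = 1 := inv_mul_cancel₀ hR1.ne'
  exact (Units.oneSub _ this).isUnit

private lemma secv_eq_add (hw : w ∈ ball w₀ (‖R‖ + 1)⁻¹) (x₀ : H) :
    secv R w₀ x₀ w = x₀ + (w - w₀) • R (secv R w₀ x₀ w) := by
  have hu := secv_isUnit (R := R) (w₀ := w₀) hw
  have h1 : ((1 : H →L[ℂ] H) - (w - w₀) • R) * Ring.inverse ((1 : H →L[ℂ] H) - (w - w₀) • R)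
      = 1 := Ring.mul_inverse_cancel _ hu
  have h2 := congrArg (fun (f : H →L[ℂ] H) => f x₀) h1
  simp only [ContinuousLinearMap.mul_apply, ContinuousLinearMap.sub_apply,
    ContinuousLinearMap.one_apply, ContinuousLinearMap.smul_apply] at h2
  have : secv R w₀ x₀ w - (w - w₀) • R (secv R w₀ x₀ w) = x₀ := h2
  exact eq_add_of_sub_eq this

private lemma secv_mem_ker (hR : (T - w₀ • (1 : H →L[ℂ] H)) ∘L R = 1)
    (x₀ : H) (hx₀ : (T - w₀ • (1 : H →L[ℂ] H)) x₀ = 0)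
    (hw : w ∈ ball w₀ (‖R‖ + 1)⁻¹) :
    (T - w • (1 : H →L[ℂ] H)) (secv R w₀ x₀ w) = 0 := by
  set y := secv R w₀ x₀ w with hy
  have h1 : y = x₀ + (w - w₀) • R y := secv_eq_add hw x₀
  have h2 : (T - w₀ • (1 : H →L[ℂ] H)) (R y) = y := by
    have := congrArg (fun (f : H →L[ℂ] H) => f y) hR
    simpa using this
  have h3 : (T - w₀ • (1 : H →L[ℂ] H)) y = (w - w₀) • y := by
    conv_lhs => rw [h1]
    rw [map_add, hx₀, map_smul, h2, zero_add]
  have : (T - w • (1 : H →L[ℂ] H)) y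
      = (T - w₀ • (1 : H →L[ℂ] H)) y - (w - w₀) • y := by
    simp only [ContinuousLinearMap.sub_apply, ContinuousLinearMap.smul_apply,
      ContinuousLinearMap.one_apply, sub_smul]
    abel
  rw [this, h3, sub_self]

private lemma secv_ne_zero (hw : w ∈ ball w₀ (‖R‖ + 1)⁻¹) {x₀ : H} (hx₀ : x₀ ≠ 0) :
    secv R w₀ x₀ w ≠ 0 := by
  intro h
  have h1 : secv R w₀ x₀ w = x₀ + (w - w₀) • R (secv R w₀ x₀ w) := secv_eq_add hw x₀
  rw [h] at h1
  simp only [map_zero, smul_zero, add_zero] at h1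
  exact hx₀ h1.symm

private lemma secv_at_w₀ (x₀ : H) : secv R w₀ x₀ w₀ = x₀ := by
  simp [secv]

private lemma secv_differentiableAt {E : Type*} [NormedAddCommGroup E] [NormedSpace ℂ E]
    (L : H →L[ℂ] E) (x₀ : H) (hw : w ∈ ball w₀ (‖R‖ + 1)⁻¹) :
    DifferentiableAt ℂ (fun z => L (secv R w₀ x₀ z)) w := by
  have h1 : DifferentiableAt ℂ
      (fun z : ℂ => (1 : H →L[ℂ] H) - (z - w₀) • R) w := by
    apply (differentiableAt_const _).sub
    exact (differentiableAt_id.sub_const w₀).smul_const R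
  have h2 : DifferentiableAt ℂ
      (fun z : ℂ => Ring.inverse ((1 : H →L[ℂ] H) - (z - w₀) • R)) w :=
    DifferentiableAt.inverse h1 (secv_isUnit hw)
  have h3 : DifferentiableAt ℂ (fun z : ℂ => secv R w₀ x₀ z) w := by
    have := h2.clm_apply (differentiableAt_const x₀)
    exact this
  exact (L.differentiable.differentiableAt).comp w h3

end Sections

section Vanishing

variable {H : Type*} [NormedAddCommGroup H] [InnerProductSpace ℂ H] [CompleteSpace H]
variable {E : Type*} [NormedAddCommGroup E] [NormedSpace ℂ E] [CompleteSpace E]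
variable {T : H →L[ℂ] H} {Ω : Set ℂ}

/-- nonzero vector in a rank-one kernel -/
private lemma exists_ker_ne_zero
    (hfr : ∀ w ∈ Ω, Module.finrank ℂ (LinearMap.ker ((T - w • (1 : H →L[ℂ] H) : H →L[ℂ] H) : H →ₗ[ℂ] H)) = 1)
    {w : ℂ} (hw : w ∈ Ω) :
    ∃ x, x ∈ LinearMap.ker ((T - w • (1 : H →L[ℂ] H) : H →L[ℂ] H) : H →ₗ[ℂ] H) ∧ x ≠ 0 := by
  by_contra h
  push_neg at h
  have hbot : LinearMap.ker ((T - w • (1 : H →L[ℂ] H) : H →L[ℂ] H) : H →ₗ[ℂ] H) = ⊥ := by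
    rw [Submodule.eq_bot_iff]
    intro x hx
    exact h x hx
  have := hfr w hw
  rw [hbot] at this
  simp at this

/-- every element of a rank-one kernel is a multiple of a given nonzero element -/
private lemma ker_eq_span
    (hfr : ∀ w ∈ Ω, Module.finrank ℂ (LinearMap.ker ((T - w • (1 : H →L[ℂ] H) : H →L[ℂ] H) : H →ₗ[ℂ] H)) = 1)
    {w : ℂ} (hw : w ∈ Ω) {x : H} (hx : x ∈ LinearMap.ker ((T - w • (1 : H →L[ℂ] H) : H →L[ℂ] H) : H →ₗ[ℂ] H))
    (hx0 : x ≠ 0) {y : H} (hy : y ∈ LinearMap.ker ((T - w • (1 : H →L[ℂ] H) : H →L[ℂ] H) : H →ₗ[ℂ] H)) :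
    ∃ c : ℂ, y = c • x := by
  set K := LinearMap.ker ((T - w • (1 : H →L[ℂ] H) : H →L[ℂ] H) : H →ₗ[ℂ] H) with hK
  haveI : FiniteDimensional ℂ K := Module.finite_of_finrank_pos (by rw [hfr w hw]; norm_num)
  have hspan : Submodule.span ℂ ({x} : Set H) = K := by
    apply Submodule.eq_of_le_of_finrank_le
    · rw [Submodule.span_le, Set.singleton_subset_iff]; exact hx
    · rw [hfr w hw, finrank_span_singleton hx0]
  rw [← hspan] at hy
  obtain ⟨c, hc⟩ := Submodule.mem_span_singleton.mp hy
  exact ⟨c, hc.symm⟩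

/-- the set of `w ∈ Ω` where `L` annihilates `ker (T - w)` -/
private def vSet (T : H →L[ℂ] H) (Ω : Set ℂ) (L : H →L[ℂ] E) : Set ℂ :=
  {w | w ∈ Ω ∧ ∀ x ∈ LinearMap.ker ((T - w • (1 : H →L[ℂ] H) : H →L[ℂ] H) : H →ₗ[ℂ] H), L x = 0}

/-- the vanishing set is relatively closed in `Ω` -/
private lemma vSet_closed
    (hsurj : ∀ w ∈ Ω, Function.Surjective (T - w • (1 : H →L[ℂ] H)))
    (L : H →L[ℂ] E) {w₀ : ℂ} (hw₀ : w₀ ∈ Ω) (hcl : w₀ ∈ closure (vSet T Ω L)) :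
    w₀ ∈ vSet T Ω L := by
  refine ⟨hw₀, fun x₀ hx₀ => ?_⟩
  obtain ⟨R, hR⟩ := exists_right_inverse _ (hsurj w₀ hw₀)
  set g : ℂ → E := fun z => L (secv R w₀ x₀ z) with hg
  have hball : w₀ ∈ Metric.ball w₀ (‖R‖ + 1)⁻¹ := by
    simp only [Metric.mem_ball, dist_self]
    positivity
  have hgw₀ : g w₀ = L x₀ := by rw [hg]; simp [secv_at_w₀]
  set s := vSet T Ω L ∩ Metric.ball w₀ (‖R‖ + 1)⁻¹ with hs
  have hcls : w₀ ∈ closure s := by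
    rw [mem_closure_iff_nhdsWithin_neBot] at hcl ⊢
    have hb : Metric.ball w₀ ((‖R‖ + 1)⁻¹) ∈ nhds w₀ :=
      Metric.ball_mem_nhds w₀ (by positivity)
    rw [hs, ← nhdsWithin_restrict' (vSet T Ω L) hb]
    exact hcl
  have hgs : ∀ w ∈ s, g w = 0 := by
    rintro w ⟨⟨hwΩ, hker⟩, hwball⟩
    exact hker _ (secv_mem_ker hR x₀ hx₀ hwball)
  have hgcont : ContinuousAt g w₀ :=
    (secv_differentiableAt L x₀ hball).continuousAt
  haveI : (nhdsWithin w₀ s).NeBot := mem_closure_iff_nhdsWithin_neBot.mp hcls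
  have h1 : Filter.Tendsto g (nhdsWithin w₀ s) (nhds (g w₀)) :=
    hgcont.continuousWithinAt.tendsto
  have h2 : Filter.Tendsto g (nhdsWithin w₀ s) (nhds 0) := by
    apply Filter.Tendsto.congr' _ tendsto_const_nhds
    filter_upwards [self_mem_nhdsWithin] with w hw
    exact (hgs w hw).symm
  have := tendsto_nhds_unique h1 h2
  rw [hgw₀] at this
  exact this

/-- identity-theorem propagation: if `L` annihilates the kernels on a nonempty relatively
open subset, it annihilates them on all of a connected `Ω`. -/
private lemma vSet_propagate
    (hΩopen : IsOpen Ω) (hΩconn : IsPreconnected Ω)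
    (hsurj : ∀ w ∈ Ω, Function.Surjective (T - w • (1 : H →L[ℂ] H)))
    (hfr : ∀ w ∈ Ω, Module.finrank ℂ (LinearMap.ker ((T - w • (1 : H →L[ℂ] H) : H →L[ℂ] H) : H →ₗ[ℂ] H)) = 1)
    (L : H →L[ℂ] E) {U : Set ℂ} (hU : IsOpen U) (hUV : U ∩ Ω ⊆ vSet T Ω L)
    (hne : (U ∩ Ω).Nonempty) :
    ∀ w ∈ Ω, w ∈ vSet T Ω L := by
  set W : Set ℂ := {w | ∃ N : Set ℂ, IsOpen N ∧ w ∈ N ∧ N ∩ Ω ⊆ vSet T Ω L} with hW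
  have hWopen : IsOpen W := by
    rw [isOpen_iff_mem_nhds]
    rintro w ⟨N, hN, hwN, hNV⟩
    exact Filter.mem_of_superset (hN.mem_nhds hwN) (fun z hz => ⟨N, hN, hz, hNV⟩)
  have hWne : (Ω ∩ W).Nonempty := by
    obtain ⟨w, hwU, hwΩ⟩ := hne
    exact ⟨w, hwΩ, U, hU, hwU, hUV⟩
  have hkey : ∀ w₀ ∈ Ω, w₀ ∈ closure W → w₀ ∈ W := by
    intro w₀ hw₀ hclW
    obtain ⟨R, hR⟩ := exists_right_inverse _ (hsurj w₀ hw₀)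
    obtain ⟨x₀, hx₀mem, hx₀ne⟩ := exists_ker_ne_zero hfr hw₀
    obtain ⟨r, hrpos, hrΩ⟩ := Metric.isOpen_iff.mp hΩopen w₀ hw₀
    set ρ : ℝ := min ((‖R‖ + 1)⁻¹) r with hρ
    have hρpos : 0 < ρ := lt_min (by positivity) hrpos
    set D := Metric.ball w₀ ρ with hD
    have hDΩ : D ⊆ Ω := fun z hz => hrΩ (Metric.ball_subset_ball (min_le_right _ _) hz)
    have hDball : D ⊆ Metric.ball w₀ ((‖R‖ + 1)⁻¹) :=
      Metric.ball_subset_ball (min_le_left _ _)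
    set g : ℂ → E := fun z => L (secv R w₀ x₀ z) with hg
    have hganal : AnalyticOnNhd ℂ g D := by
      apply DifferentiableOn.analyticOnNhd _ Metric.isOpen_ball
      intro z hz
      exact (secv_differentiableAt L x₀ (hDball hz)).differentiableWithinAt
    obtain ⟨w₁, hw₁W, hw₁D⟩ : ∃ w₁, w₁ ∈ W ∧ w₁ ∈ D := by
      have := _root_.mem_closure_iff.mp hclW D Metric.isOpen_ball
        (Metric.mem_ball_self hρpos)
      obtain ⟨w₁, hw₁D, hw₁W⟩ := this
      exact ⟨w₁, hw₁W, hw₁D⟩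
    obtain ⟨N, hNopen, hw₁N, hNV⟩ := hw₁W
    have hgev : g =ᶠ[nhds w₁] 0 := by
      filter_upwards [(hNopen.inter Metric.isOpen_ball).mem_nhds ⟨hw₁N, hw₁D⟩]
        with z ⟨hzN, hzD⟩
      obtain ⟨-, hker⟩ := hNV ⟨hzN, hDΩ hzD⟩
      exact hker _ (secv_mem_ker hR x₀ hx₀mem (hDball hzD))
    have hg0 : Set.EqOn g 0 D :=
      hganal.eqOn_zero_of_preconnected_of_eventuallyEq_zero
        (convex_ball w₀ ρ).isPreconnected hw₁D hgev
    refine ⟨D, Metric.isOpen_ball, Metric.mem_ball_self hρpos, ?_⟩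
    rintro z ⟨hzD, hzΩ⟩
    refine ⟨hzΩ, fun y hy => ?_⟩
    have hsec_mem := secv_mem_ker hR x₀ hx₀mem (hDball hzD)
    have hsec_ne := secv_ne_zero (hDball hzD) hx₀ne
    obtain ⟨c, rfl⟩ := ker_eq_span hfr hzΩ hsec_mem hsec_ne hy
    have : L (secv R w₀ x₀ z) = 0 := hg0 hzD
    rw [map_smul, this, smul_zero]
  -- connectedness argument
  intro w hw
  by_contra hwV
  have hwnW : w ∉ W := fun hWmem => by
    obtain ⟨N, hN, hwN, hNV⟩ := hWmem
    exact hwV (hNV ⟨hwN, hw⟩)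
  have hwncl : w ∉ closure W := fun h => hwnW (hkey w hw h)
  have hsub : Ω ⊆ W ∪ (closure W)ᶜ := by
    intro z hz
    by_cases hzc : z ∈ closure W
    · exact Or.inl (hkey z hz hzc)
    · exact Or.inr hzc
  have := hΩconn W (closure W)ᶜ hWopen (isClosed_closure.isOpen_compl) hsub
    (hWne.imp (fun z hz => ⟨hz.1, hz.2⟩)) ⟨w, hw, hwncl⟩
  obtain ⟨z, -, hzW, hzc⟩ := this
  exact hzc (subset_closure hzW)

/-- if `L` annihilates all the kernels and they span densely, `L = 0`. -/
private lemma vSet_all_eq_zero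
    (hdense : (⨆ w ∈ Ω, LinearMap.ker ((T - w • (1 : H →L[ℂ] H) : H →L[ℂ] H) : H →ₗ[ℂ] H)).topologicalClosure = ⊤)
    (L : H →L[ℂ] E) (hvan : ∀ w ∈ Ω, w ∈ vSet T Ω L) : L = 0 := by
  have h1 : (⨆ w ∈ Ω, LinearMap.ker ((T - w • (1 : H →L[ℂ] H) : H →L[ℂ] H) : H →ₗ[ℂ] H)) ≤ LinearMap.ker (L : H →ₗ[ℂ] E) := by
    apply iSup_le; intro w; apply iSup_le; intro hw
    intro x hx
    exact (hvan w hw).2 x hx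
  have h2 : (⨆ w ∈ Ω, LinearMap.ker ((T - w • (1 : H →L[ℂ] H) : H →L[ℂ] H) : H →ₗ[ℂ] H)).topologicalClosure
      ≤ LinearMap.ker (L : H →ₗ[ℂ] E) :=
    Submodule.topologicalClosure_minimal _ h1 (ContinuousLinearMap.isClosed_ker L)
  rw [hdense] at h2
  ext x
  have : x ∈ LinearMap.ker (L : H →ₗ[ℂ] E) := h2 trivial
  simpa using this

end Vanishing

section B1
variable {H : Type*} [NormedAddCommGroup H] [InnerProductSpace ℂ H] [CompleteSpace H]
variable {T : H →L[ℂ] H} {Ω : Set ℂ}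

/-- commuting operators preserve kernels -/
private lemma mem_ker_of_comm {P : H →L[ℂ] H} (hcomm : P ∘L T = T ∘L P) {w : ℂ} {x : H}
    (hx : x ∈ LinearMap.ker ((T - w • (1 : H →L[ℂ] H) : H →L[ℂ] H) : H →ₗ[ℂ] H)) :
    P x ∈ LinearMap.ker ((T - w • (1 : H →L[ℂ] H) : H →L[ℂ] H) : H →ₗ[ℂ] H) := by
  have hx' : T x = w • x := by
    have := hx
    simp only [LinearMap.mem_ker, ContinuousLinearMap.coe_sub', Pi.sub_apply,
      ContinuousLinearMap.smul_apply, ContinuousLinearMap.coe_smul',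
      ContinuousLinearMap.one_apply, Pi.smul_apply, sub_eq_zero, ContinuousLinearMap.coe_coe] at this
    exact this
  have hTP : T (P x) = P (T x) := by
    have := congrArg (fun (f : H →L[ℂ] H) => f x) hcomm
    simpa using this.symm
  simp only [LinearMap.mem_ker, ContinuousLinearMap.coe_sub', Pi.sub_apply,
    ContinuousLinearMap.smul_apply, ContinuousLinearMap.coe_smul',
    ContinuousLinearMap.one_apply, Pi.smul_apply, sub_eq_zero, ContinuousLinearMap.coe_coe]
  rw [hTP, hx', map_smul]

/-- An operator in `B₁(Ω)` (surjectivity, rank-one kernels, dense span) over a connected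
open set is strongly irreducible. -/
private lemma b1_strongly_irreducible
    (hΩopen : IsOpen Ω) (hΩconn : IsPreconnected Ω)
    (hsurj : ∀ w ∈ Ω, Function.Surjective (T - w • (1 : H →L[ℂ] H)))
    (hdense : (⨆ w ∈ Ω, LinearMap.ker ((T - w • (1 : H →L[ℂ] H) : H →L[ℂ] H) : H →ₗ[ℂ] H)).topologicalClosure = ⊤)
    (hfr : ∀ w ∈ Ω, Module.finrank ℂ (LinearMap.ker ((T - w • (1 : H →L[ℂ] H) : H →L[ℂ] H) : H →ₗ[ℂ] H)) = 1)
    (P : H →L[ℂ] H) (hP2 : P ∘L P = P) (hcomm : P ∘L T = T ∘L P) :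
    P = 0 ∨ P = 1 := by
  set Ω₀ := vSet T Ω P with hΩ₀
  set Ω₁ := vSet T Ω ((1 : H →L[ℂ] H) - P) with hΩ₁
  have hcover : ∀ w ∈ Ω, w ∈ Ω₀ ∪ Ω₁ := by
    intro w hw
    obtain ⟨x, hxmem, hxne⟩ := exists_ker_ne_zero hfr hw
    have hPx : P x ∈ LinearMap.ker ((T - w • (1 : H →L[ℂ] H) : H →L[ℂ] H) : H →ₗ[ℂ] H) := mem_ker_of_comm hcomm hxmem
    obtain ⟨c, hc⟩ := ker_eq_span hfr hw hxmem hxne hPx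
    have hc2 : c * c = c := by
      have h1 : P (P x) = P x := by
        have := congrArg (fun (f : H →L[ℂ] H) => f x) hP2
        simpa using this
      rw [hc, map_smul, hc, smul_smul] at h1
      have : (c * c - c) • x = 0 := by rw [sub_smul, h1, sub_self]
      rcases smul_eq_zero.mp this with h | h
      · exact sub_eq_zero.mp h
      · exact absurd h hxne
    have hc01 : c = 0 ∨ c = 1 := by
      have : c * (c - 1) = 0 := by linear_combination hc2
      rcases mul_eq_zero.mp this with h | h
      · exact Or.inl h
      · exact Or.inr (by linear_combination h)
    rcases hc01 with h | h
    · left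
      refine ⟨hw, fun y hy => ?_⟩
      obtain ⟨d, rfl⟩ := ker_eq_span hfr hw hxmem hxne hy
      rw [map_smul, hc, h, zero_smul, smul_zero]
    · right
      refine ⟨hw, fun y hy => ?_⟩
      obtain ⟨d, rfl⟩ := ker_eq_span hfr hw hxmem hxne hy
      have hPx0 : ((1 : H →L[ℂ] H) - P) x = 0 := by
        simp only [ContinuousLinearMap.coe_sub', Pi.sub_apply,
          ContinuousLinearMap.one_apply]
        rw [hc, h, one_smul, sub_self]
      rw [map_smul, hPx0, smul_zero]
  have hdisj : ∀ w ∈ Ω, ¬(w ∈ Ω₀ ∧ w ∈ Ω₁) := by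
    rintro w hw ⟨⟨-, h0⟩, ⟨-, h1⟩⟩
    obtain ⟨x, hxmem, hxne⟩ := exists_ker_ne_zero hfr hw
    have e0 := h0 x hxmem
    have e1 := h1 x hxmem
    simp only [ContinuousLinearMap.coe_sub', Pi.sub_apply,
      ContinuousLinearMap.one_apply] at e1
    rw [e0, sub_zero] at e1
    exact hxne e1
  -- connectedness: one of the two vanishing sets must be all of Ω
  have hfinal : (∀ w ∈ Ω, w ∈ Ω₀) ∨ (∀ w ∈ Ω, w ∈ Ω₁) := by
    by_contra hcon
    push_neg at hcon
    obtain ⟨⟨w₀', hw₀'Ω, hw₀'⟩, ⟨w₁', hw₁'Ω, hw₁'⟩⟩ := hcon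
    set u := (closure Ω₁)ᶜ with hu
    set v := (closure Ω₀)ᶜ with hv
    have hclosed₀ : ∀ w ∈ Ω, w ∈ closure Ω₀ → w ∈ Ω₀ := fun w hw hc =>
      vSet_closed hsurj P hw hc
    have hclosed₁ : ∀ w ∈ Ω, w ∈ closure Ω₁ → w ∈ Ω₁ := fun w hw hc =>
      vSet_closed hsurj _ hw hc
    have hsub : Ω ⊆ u ∪ v := by
      intro z hz
      by_contra hzc
      simp only [hu, hv, Set.mem_union, Set.mem_compl_iff, not_or, not_not] at hzc
      exact hdisj z hz ⟨hclosed₀ z hz hzc.2, hclosed₁ z hz hzc.1⟩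
    have hmem_v : ∀ w ∈ Ω, w ∉ Ω₀ → w ∈ v := by
      intro w hw hw0 hc
      exact hw0 (hclosed₀ w hw hc)
    have hmem_u : ∀ w ∈ Ω, w ∉ Ω₁ → w ∈ u := by
      intro w hw hw1 hc
      exact hw1 (hclosed₁ w hw hc)
    have := hΩconn u v (isClosed_closure.isOpen_compl) (isClosed_closure.isOpen_compl)
      hsub ⟨w₁', hw₁'Ω, hmem_u w₁' hw₁'Ω hw₁'⟩ ⟨w₀', hw₀'Ω, hmem_v w₀' hw₀'Ω hw₀'⟩
    obtain ⟨z, hzΩ, hzu, hzv⟩ := this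
    rcases hcover z hzΩ with h | h
    · exact hzv (subset_closure h)
    · exact hzu (subset_closure h)
  rcases hfinal with h | h
  · exact Or.inl (vSet_all_eq_zero hdense P h)
  · right
    have := vSet_all_eq_zero hdense ((1 : H →L[ℂ] H) - P) h
    have := sub_eq_zero.mp this
    exact this.symm

end B1

section Quasinil
variable {H : Type*} [NormedAddCommGroup H] [InnerProductSpace ℂ H] [CompleteSpace H]
variable {T : H →L[ℂ] H} {Ω : Set ℂ}

private lemma dOp_norm_le (a x : H →L[ℂ] H) : ‖dOp a x‖ ≤ 2 * ‖a‖ * ‖x‖ := by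
  have h1 : ‖a * x‖ ≤ ‖a‖ * ‖x‖ := norm_mul_le a x
  have h2 : ‖x * a‖ ≤ ‖x‖ * ‖a‖ := norm_mul_le x a
  calc ‖dOp a x‖ ≤ ‖a * x‖ + ‖x * a‖ := norm_sub_le _ _
    _ ≤ ‖a‖ * ‖x‖ + ‖x‖ * ‖a‖ := add_le_add h1 h2
    _ = 2 * ‖a‖ * ‖x‖ := by ring

private lemma dOp_iter_norm_le (a x : H →L[ℂ] H) (n : ℕ) :
    ‖(dOp a)^[n] x‖ ≤ (2 * ‖a‖)^n * ‖x‖ := by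
  induction n with
  | zero => simp
  | succ n ih =>
    rw [Function.iterate_succ_apply']
    calc ‖dOp a ((dOp a)^[n] x)‖ ≤ 2 * ‖a‖ * ‖(dOp a)^[n] x‖ := dOp_norm_le _ _
      _ ≤ 2 * ‖a‖ * ((2 * ‖a‖)^n * ‖x‖) := by
          apply mul_le_mul_of_nonneg_left ih (by positivity)
      _ = (2 * ‖a‖)^(n+1) * ‖x‖ := by ring

private lemma kleinecke_bound (a b : H →L[ℂ] H)
    (hc : a * (a*b - b*a) = (a*b - b*a) * a) (n : ℕ) :
    (n.factorial : ℝ) * ‖(a*b - b*a)^n‖ ≤ (2 * ‖a‖ * ‖b‖)^n := by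
  have h1 : (n.factorial : ℝ) * ‖(a*b - b*a)^n‖ = ‖(dOp a)^[n] (b^n)‖ := by
    rw [dOp_iter_pow hc n, ← Nat.cast_smul_eq_nsmul ℝ, norm_smul]
    simp
  rw [h1]
  have hbn : ‖b^n‖ ≤ ‖b‖^n := by
    rcases Nat.eq_zero_or_pos n with rfl | hn
    · simpa [ContinuousLinearMap.one_def] using ContinuousLinearMap.norm_id_le
    · exact norm_pow_le' b hn
  calc ‖(dOp a)^[n] (b^n)‖ ≤ (2 * ‖a‖)^n * ‖b^n‖ := dOp_iter_norm_le _ _ _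
    _ ≤ (2 * ‖a‖)^n * ‖b‖^n := by
        apply mul_le_mul_of_nonneg_left hbn (by positivity)
    _ = (2 * ‖a‖ * ‖b‖)^n := by rw [mul_pow (2 * ‖a‖) ‖b‖]

/-- an operator commuting with `T` whose powers decay factorially kills rank-one kernels -/
private lemma quasinil_kills_ker
    (hfr : ∀ w ∈ Ω, Module.finrank ℂ (LinearMap.ker ((T - w • (1 : H →L[ℂ] H) : H →L[ℂ] H) : H →ₗ[ℂ] H)) = 1)
    {Z : H →L[ℂ] H} (hcomm : Z ∘L T = T ∘L Z) {M : ℝ}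
    (hfac : ∀ n : ℕ, (n.factorial : ℝ) * ‖Z^n‖ ≤ M^n)
    {w : ℂ} (hw : w ∈ Ω) {x : H} (hx : x ∈ LinearMap.ker ((T - w • (1 : H →L[ℂ] H) : H →L[ℂ] H) : H →ₗ[ℂ] H)) :
    Z x = 0 := by
  rcases eq_or_ne x 0 with rfl | hxne
  · simp
  have hZx : Z x ∈ LinearMap.ker ((T - w • (1 : H →L[ℂ] H) : H →L[ℂ] H) : H →ₗ[ℂ] H) := mem_ker_of_comm hcomm hx
  obtain ⟨c, hc⟩ := ker_eq_span hfr hw hx hxne hZx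
  have hpow : ∀ n : ℕ, (Z^n) x = c^n • x := by
    intro n
    induction n with
    | zero => simp
    | succ n ih =>
      rw [pow_succ', pow_succ']
      have : (Z * Z^n) x = Z ((Z^n) x) := rfl
      rw [this, ih, map_smul, hc, smul_smul, mul_comm]
  have hcn : ∀ n : ℕ, ‖c‖^n ≤ ‖Z^n‖ := by
    intro n
    have h1 : ‖(Z^n) x‖ = ‖c‖^n * ‖x‖ := by rw [hpow n, norm_smul, norm_pow]
    have h2 : ‖(Z^n) x‖ ≤ ‖Z^n‖ * ‖x‖ := (Z^n).le_opNorm x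
    rw [h1] at h2
    exact le_of_mul_le_mul_right h2 (norm_pos_iff.mpr hxne)
  have hc0 : c = 0 := by
    by_contra hcne
    have hcpos : 0 < ‖c‖ := norm_pos_iff.mpr hcne
    set q : ℝ := M / ‖c‖ with hq
    have hlim := FloorSemiring.tendsto_pow_div_factorial_atTop q
    have hev : ∀ᶠ n : ℕ in Filter.atTop, q^n / (n.factorial : ℝ) < 1 :=
      hlim.eventually_lt_const (by norm_num)
    obtain ⟨n, hn⟩ := hev.exists
    have hge : (1:ℝ) ≤ q^n / (n.factorial : ℝ) := by
      rw [hq, div_pow, div_div]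
      rw [le_div_iff₀ (by positivity)]
      have := (hfac n).trans' (mul_le_mul_of_nonneg_left (hcn n)
        (by positivity : (0:ℝ) ≤ (n.factorial : ℝ)))
      linarith [this]
    linarith
  rw [hc, hc0, zero_smul]

end Quasinil

section MainSetup
variable {H : Type*} [NormedAddCommGroup H] [InnerProductSpace ℂ H] [CompleteSpace H]

private lemma mem_ker_op {T : H →L[ℂ] H} {w : ℂ} {x : H} :
    x ∈ LinearMap.ker ((T - w • (1 : H →L[ℂ] H) : H →L[ℂ] H) : H →ₗ[ℂ] H) ↔ T x = w • x := by
  simp only [LinearMap.mem_ker, ContinuousLinearMap.coe_sub', Pi.sub_apply,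
    ContinuousLinearMap.coe_smul', ContinuousLinearMap.one_apply, Pi.smul_apply,
    sub_eq_zero, ContinuousLinearMap.coe_coe]

end MainSetup

section Main

variable {H₀ H₁ : Type*}
  [NormedAddCommGroup H₀] [NormedSpace ℂ H₀]
  [NormedAddCommGroup H₁] [NormedSpace ℂ H₁]

private lemma blockOp₂_apply (T₀ : H₀ →L[ℂ] H₀) (S : H₁ →L[ℂ] H₀) (T₁ : H₁ →L[ℂ] H₁)
    (v : WithLp 2 (H₀ × H₁)) :
    (WithLp.prodContinuousLinearEquiv 2 ℂ H₀ H₁) (blockOp₂ T₀ S T₁ v)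
      = (T₀ ((WithLp.prodContinuousLinearEquiv 2 ℂ H₀ H₁) v).1
          + S ((WithLp.prodContinuousLinearEquiv 2 ℂ H₀ H₁) v).2,
         T₁ ((WithLp.prodContinuousLinearEquiv 2 ℂ H₀ H₁) v).2) := by
  simp only [blockOp₂, ContinuousLinearMap.comp_apply, ContinuousLinearEquiv.coe_coe,
    ContinuousLinearEquiv.apply_symm_apply, ContinuousLinearMap.prod_apply,
    ContinuousLinearMap.add_apply, ContinuousLinearMap.coe_fst',
    ContinuousLinearMap.coe_snd']

private lemma blockOp₂_apply_symm (T₀ : H₀ →L[ℂ] H₀) (S : H₁ →L[ℂ] H₀) (T₁ : H₁ →L[ℂ] H₁)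
    (u : H₀ × H₁) :
    blockOp₂ T₀ S T₁ ((WithLp.prodContinuousLinearEquiv 2 ℂ H₀ H₁).symm u)
      = (WithLp.prodContinuousLinearEquiv 2 ℂ H₀ H₁).symm
          (T₀ u.1 + S u.2, T₁ u.2) := by
  apply (WithLp.prodContinuousLinearEquiv 2 ℂ H₀ H₁).injective
  rw [blockOp₂_apply]
  simp

end Main

/-- `T ∈ 𝓕B₂(Ω)` is strongly irreducible iff `S` is not in the range of the Rosenblum
operator `σ_{T₀,T₁} : X ↦ T₀X - XT₁`. -/
theorem statement14
    {H₀ H₁ : Type*}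
    [NormedAddCommGroup H₀] [InnerProductSpace ℂ H₀] [CompleteSpace H₀]
    [TopologicalSpace.SeparableSpace H₀]
    [NormedAddCommGroup H₁] [InnerProductSpace ℂ H₁] [CompleteSpace H₁]
    [TopologicalSpace.SeparableSpace H₁]
    (Ω : Set ℂ) (hΩopen : IsOpen Ω) (hΩconn : IsConnected Ω)
    (T₀ : H₀ →L[ℂ] H₀) (T₁ : H₁ →L[ℂ] H₁) (S : H₁ →L[ℂ] H₀)
    (h₀ : CowenDouglas 1 Ω T₀) (h₁ : CowenDouglas 1 Ω T₁)
    (hS : S ≠ 0) (hint : T₀ ∘L S = S ∘L T₁) :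
    (∀ P : WithLp 2 (H₀ × H₁) →L[ℂ] WithLp 2 (H₀ × H₁),
        P * P = P →
        P * blockOp₂ T₀ S T₁ = blockOp₂ T₀ S T₁ * P →
        P = 0 ∨ P = 1) ↔
      ¬ ∃ X : H₁ →L[ℂ] H₀, S = T₀ ∘L X - X ∘L T₁ := by
  obtain ⟨-, hsurj0, hdense0, hfr0⟩ := h₀
  obtain ⟨-, hsurj1, hdense1, hfr1⟩ := h₁
  set e := WithLp.prodContinuousLinearEquiv 2 ℂ H₀ H₁ with he
  have hba : ∀ (A : H₀ →L[ℂ] H₀) (B : H₁ →L[ℂ] H₀) (C : H₁ →L[ℂ] H₁)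
      (v : WithLp 2 (H₀ × H₁)),
      e (blockOp₂ A B C v) = (A (e v).1 + B (e v).2, C (e v).2) :=
    fun A B C v => blockOp₂_apply A B C v
  have hbs : ∀ (A : H₀ →L[ℂ] H₀) (B : H₁ →L[ℂ] H₀) (C : H₁ →L[ℂ] H₁) (u : H₀ × H₁),
      blockOp₂ A B C (e.symm u) = e.symm (A u.1 + B u.2, C u.2) :=
    fun A B C u => blockOp₂_apply_symm A B C u
  constructor
  · -- strong irreducibility implies S ∉ ran σ
    rintro hP ⟨X, hX⟩
    have hXq : ∀ q, S q = T₀ (X q) - X (T₁ q) := by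
      intro q
      rw [hX]
      simp
    have hP2 : blockOp₂ (1 : H₀ →L[ℂ] H₀) X (0 : H₁ →L[ℂ] H₁)
        * blockOp₂ (1 : H₀ →L[ℂ] H₀) X (0 : H₁ →L[ℂ] H₁)
        = blockOp₂ (1 : H₀ →L[ℂ] H₀) X (0 : H₁ →L[ℂ] H₁) := by
      apply ContinuousLinearMap.ext
      intro v
      apply e.injective
      rw [ContinuousLinearMap.mul_apply, hba, hba]
      simp
    have hPcommB : blockOp₂ (1 : H₀ →L[ℂ] H₀) X (0 : H₁ →L[ℂ] H₁) * blockOp₂ T₀ S T₁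
        = blockOp₂ T₀ S T₁ * blockOp₂ (1 : H₀ →L[ℂ] H₀) X (0 : H₁ →L[ℂ] H₁) := by
      apply ContinuousLinearMap.ext
      intro v
      apply e.injective
      rw [ContinuousLinearMap.mul_apply, ContinuousLinearMap.mul_apply,
        hba, hba, hba, hba]
      simp only [ContinuousLinearMap.one_apply, ContinuousLinearMap.zero_apply,
        map_zero, add_zero, Prod.mk.injEq]
      constructor
      · rw [hXq (e v).2, map_add]
        abel
      · trivial
    obtain ⟨w, hw⟩ := hΩconn.nonempty
    rcases hP _ hP2 hPcommB with h0 | h1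
    · obtain ⟨x₀, hx₀mem, hx₀ne⟩ := exists_ker_ne_zero hfr0 hw
      have h2 := congrArg (fun (f : WithLp 2 (H₀ × H₁) →L[ℂ] WithLp 2 (H₀ × H₁)) =>
        f (e.symm (x₀, 0))) h0
      simp only [ContinuousLinearMap.zero_apply] at h2
      rw [hbs] at h2
      simp only [ContinuousLinearMap.one_apply, map_zero, add_zero,
        ContinuousLinearMap.zero_apply] at h2
      have h3 : ((x₀, 0) : H₀ × H₁) = e 0 := by
        rw [← h2]
        simp
      rw [map_zero] at h3
      exact hx₀ne (congrArg Prod.fst h3)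
    · obtain ⟨y₀, hy₀mem, hy₀ne⟩ := exists_ker_ne_zero hfr1 hw
      have h2 := congrArg (fun (f : WithLp 2 (H₀ × H₁) →L[ℂ] WithLp 2 (H₀ × H₁)) =>
        f (e.symm (0, y₀))) h1
      simp only [ContinuousLinearMap.one_apply] at h2
      rw [hbs] at h2
      simp only [ContinuousLinearMap.one_apply, map_zero, zero_add,
        ContinuousLinearMap.zero_apply] at h2
      have h3 : ((X y₀, 0) : H₀ × H₁) = (0, y₀) := e.symm.injective h2
      exact hy₀ne (congrArg Prod.snd h3).symm
  · -- S ∉ ran σ implies strong irreducibility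
    intro hnoX P hP2 hPcommB
    set Qc : (H₀ × H₁) →L[ℂ] (H₀ × H₁) :=
      (e : WithLp 2 (H₀ × H₁) →L[ℂ] H₀ × H₁) ∘L P ∘L
        (e.symm : H₀ × H₁ →L[ℂ] WithLp 2 (H₀ × H₁)) with hQc
    have hQcv : ∀ u : H₀ × H₁, Qc u = e (P (e.symm u)) := by
      intro u; simp [hQc]
    set A : H₀ →L[ℂ] H₀ := fst ℂ H₀ H₁ ∘L Qc ∘L inl ℂ H₀ H₁ with hA
    set B : H₁ →L[ℂ] H₀ := fst ℂ H₀ H₁ ∘L Qc ∘L inr ℂ H₀ H₁ with hB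
    set C : H₀ →L[ℂ] H₁ := snd ℂ H₀ H₁ ∘L Qc ∘L inl ℂ H₀ H₁ with hC
    set D : H₁ →L[ℂ] H₁ := snd ℂ H₀ H₁ ∘L Qc ∘L inr ℂ H₀ H₁ with hD
    have hQblock : ∀ x y, Qc (x, y) = (A x + B y, C x + D y) := by
      intro x y
      have h1 : ((x, y) : H₀ × H₁) = (x, 0) + (0, y) := by simp
      rw [h1, map_add]
      have h2 : Qc (x, 0) = (A x, C x) := by
        simp only [hA, hC, ContinuousLinearMap.comp_apply, inl_apply,
          coe_fst', coe_snd']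
      have h3 : Qc (0, y) = (B y, D y) := by
        simp only [hB, hD, ContinuousLinearMap.comp_apply, inr_apply,
          coe_fst', coe_snd']
      rw [h2, h3, Prod.mk_add_mk]
    -- idempotency of Qc
    have hidem : ∀ u : H₀ × H₁, Qc (Qc u) = Qc u := by
      intro u
      have := congrArg (fun (f : WithLp 2 (H₀ × H₁) →L[ℂ] WithLp 2 (H₀ × H₁)) =>
        e (f (e.symm u))) hP2
      simp only [ContinuousLinearMap.mul_apply] at this
      rw [hQcv, hQcv, ContinuousLinearEquiv.symm_apply_apply]
      exact this
    -- commutation of Qc with the block matrix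
    have hcomm' : ∀ x y, Qc (T₀ x + S y, T₁ y)
        = (T₀ (Qc (x, y)).1 + S (Qc (x, y)).2, T₁ (Qc (x, y)).2) := by
      intro x y
      have h := congrArg (fun (f : WithLp 2 (H₀ × H₁) →L[ℂ] WithLp 2 (H₀ × H₁)) =>
        f (e.symm (x, y))) hPcommB
      simp only [ContinuousLinearMap.mul_apply] at h
      -- h : P (blockOp (e.symm (x,y))) = blockOp (P (e.symm (x,y)))
      rw [blockOp₂_apply_symm] at h
      have h2 := congrArg e h
      rw [← hQcv] at h2
      rw [blockOp₂_apply] at h2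
      rw [hQcv] at h2
      simp [hQcv] at h2 ⊢
      exact h2
    have rel1 : ∀ x, A (T₀ x) = T₀ (A x) + S (C x) := by
      intro x
      have := hcomm' x 0
      simp only [map_zero, add_zero] at this
      rw [hQblock, hQblock] at this
      simp only [map_zero, add_zero] at this
      exact congrArg Prod.fst this
    have rel3 : ∀ x, C (T₀ x) = T₁ (C x) := by
      intro x
      have := hcomm' x 0
      simp only [map_zero, add_zero] at this
      rw [hQblock, hQblock] at this
      simp only [map_zero, add_zero] at this
      exact congrArg Prod.snd this
    have rel2 : ∀ y, A (S y) + B (T₁ y) = T₀ (B y) + S (D y) := by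
      intro y
      have := hcomm' 0 y
      simp only [map_zero, zero_add] at this
      rw [hQblock, hQblock] at this
      simp only [map_zero, zero_add] at this
      exact congrArg Prod.fst this
    have rel4 : ∀ y, C (S y) + D (T₁ y) = T₁ (D y) := by
      intro y
      have := hcomm' 0 y
      simp only [map_zero, zero_add] at this
      rw [hQblock, hQblock] at this
      simp only [map_zero, zero_add] at this
      exact congrArg Prod.snd this
    have id1 : ∀ x, A (A x) + B (C x) = A x := by
      intro x
      have := hidem (x, 0)
      rw [hQblock, hQblock] at this
      simp only [map_zero, add_zero] at this
      exact congrArg Prod.fst this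
    have id3 : ∀ x, C (A x) + D (C x) = C x := by
      intro x
      have := hidem (x, 0)
      rw [hQblock, hQblock] at this
      simp only [map_zero, add_zero] at this
      exact congrArg Prod.snd this
    have id2 : ∀ y, A (B y) + B (D y) = B y := by
      intro y
      have := hidem (0, y)
      rw [hQblock, hQblock] at this
      simp only [map_zero, zero_add] at this
      exact congrArg Prod.fst this
    have id4 : ∀ y, C (B y) + D (D y) = D y := by
      intro y
      have := hidem (0, y)
      rw [hQblock, hQblock] at this
      simp only [map_zero, zero_add] at this
      exact congrArg Prod.snd this
    have hST : ∀ y, T₀ (S y) = S (T₁ y) := by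
      intro y
      have := congrArg (fun (f : H₁ →L[ℂ] H₀) => f y) hint
      simpa using this
    -- Step 1 : Z := C ∘ S is zero (Kleinecke–Shirokov)
    set Z : H₁ →L[ℂ] H₁ := C ∘L S with hZ
    have hZcomm : Z ∘L T₁ = T₁ ∘L Z := by
      ext y
      simp only [ContinuousLinearMap.comp_apply, hZ]
      rw [← hST, rel3]
    have hZeq : Z = T₁ * D - D * T₁ := by
      ext y
      simp only [hZ, ContinuousLinearMap.comp_apply, ContinuousLinearMap.sub_apply,
        ContinuousLinearMap.mul_apply]
      have := rel4 y
      have h' : C (S y) = T₁ (D y) - D (T₁ y) := by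
        rw [← this]; abel
      exact h'
    have hfac : ∀ n : ℕ, (n.factorial : ℝ) * ‖Z ^ n‖ ≤ (2 * ‖T₁‖ * ‖D‖) ^ n := by
      intro n
      have hcZ : T₁ * (T₁ * D - D * T₁) = (T₁ * D - D * T₁) * T₁ := by
        rw [← hZeq]
        calc T₁ * Z = T₁ ∘L Z := rfl
          _ = Z ∘L T₁ := hZcomm.symm
          _ = Z * T₁ := rfl
      have := kleinecke_bound T₁ D hcZ n
      rw [← hZeq] at this
      exact this
    have hZkill : ∀ w ∈ Ω, ∀ y ∈ LinearMap.ker ((T₁ - w • (1 : H₁ →L[ℂ] H₁) : H₁ →L[ℂ] H₁) : H₁ →ₗ[ℂ] H₁), Z y = 0 :=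
      fun w hw y hy => quasinil_kills_ker hfr1 hZcomm hfac hw hy
    have hZ0 : Z = 0 := vSet_all_eq_zero hdense1 Z (fun w hw => ⟨hw, hZkill w hw⟩)
    have hCS : ∀ y, C (S y) = 0 := by
      intro y
      have : Z y = 0 := by rw [hZ0]; rfl
      simpa [hZ] using this
    -- Step 2 : C = 0
    have hVP : ∀ w ∈ Ω, w ∈ vSet T₀ Ω C := by
      by_contra hcon
      push_neg at hcon
      obtain ⟨w₁, hw₁Ω, hw₁⟩ := hcon
      set U := (closure (vSet T₀ Ω C))ᶜ with hU
      have hUopen : IsOpen U := isClosed_closure.isOpen_compl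
      have hw₁U : w₁ ∈ U := by
        intro hc
        exact hw₁ (vSet_closed hsurj0 C hw₁Ω hc)
      have hUsub : U ∩ Ω ⊆ vSet T₁ Ω S := by
        rintro z ⟨hzU, hzΩ⟩
        refine ⟨hzΩ, fun y hy => ?_⟩
        by_contra hSy
        -- S y is a nonzero element of ker (T₀ - z)
        have hSymem : S y ∈ LinearMap.ker ((T₀ - z • (1 : H₀ →L[ℂ] H₀) : H₀ →L[ℂ] H₀) : H₀ →ₗ[ℂ] H₀) := by
          rw [mem_ker_op]
          rw [hST, mem_ker_op.mp hy, map_smul]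
        have hzVP : z ∈ vSet T₀ Ω C := by
          refine ⟨hzΩ, fun x hx => ?_⟩
          obtain ⟨c, rfl⟩ := ker_eq_span hfr0 hzΩ hSymem hSy hx
          rw [map_smul, hCS, smul_zero]
        exact hzU (subset_closure hzVP)
      have hall := vSet_propagate hΩopen hΩconn.isPreconnected hsurj1 hfr1 S hUopen
        hUsub ⟨w₁, hw₁U, hw₁Ω⟩
      exact hS (vSet_all_eq_zero hdense1 S hall)
    have hC0 : ∀ x, C x = 0 := by
      have := vSet_all_eq_zero hdense0 C hVP
      intro x
      rw [this]
      rfl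
    -- Step 3 : A and D are idempotents commuting with T₀, T₁
    have hA2 : A ∘L A = A := by
      ext x
      have := id1 x
      rw [hC0, map_zero, add_zero] at this
      exact this
    have hAcomm : A ∘L T₀ = T₀ ∘L A := by
      ext x
      have := rel1 x
      rw [hC0, map_zero, add_zero] at this
      exact this
    have hD2 : D ∘L D = D := by
      ext y
      have := id4 y
      rw [hC0, zero_add] at this
      exact this
    have hDcomm : D ∘L T₁ = T₁ ∘L D := by
      ext y
      have := rel4 y
      rw [hC0, zero_add] at this
      exact this
    have hAcase := b1_strongly_irreducible hΩopen hΩconn.isPreconnected hsurj0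
      hdense0 hfr0 A hA2 hAcomm
    have hDcase := b1_strongly_irreducible hΩopen hΩconn.isPreconnected hsurj1
      hdense1 hfr1 D hD2 hDcomm
    -- final case analysis
    have hPQ : ∀ v : WithLp 2 (H₀ × H₁), P v = e.symm (Qc (e v)) := by
      intro v
      rw [hQcv]
      simp
    rcases hAcase with hA0 | hA1 <;> rcases hDcase with hD0 | hD1
    · -- A = 0, D = 0 : P = 0
      left
      have hB0 : ∀ y, B y = 0 := by
        intro y
        have := id2 y
        rw [hA0, hD0] at this
        simpa using this.symm
      ext v
      rw [hPQ]
      have : Qc (e v) = 0 := by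
        have h1 : e v = ((e v).1, (e v).2) := rfl
        rw [h1, hQblock, hA0, hD0, hB0, hC0]
        simp
      rw [this]
      simp
    · -- A = 0, D = 1 : S = T₀ (-B) - (-B) T₁, contradiction
      exfalso
      apply hnoX
      refine ⟨-B, ?_⟩
      ext y
      have := rel2 y
      rw [hA0] at this
      simp only [ContinuousLinearMap.zero_apply, zero_add, hD1,
        ContinuousLinearMap.one_apply] at this
      simp only [ContinuousLinearMap.sub_apply, ContinuousLinearMap.comp_apply,
        ContinuousLinearMap.neg_apply, map_neg]
      have h2 : S y = B (T₁ y) - T₀ (B y) := by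
        rw [this]
        abel
      rw [h2]
      abel
    · -- A = 1, D = 0 : S = T₀ B - B T₁, contradiction
      exfalso
      apply hnoX
      refine ⟨B, ?_⟩
      ext y
      have := rel2 y
      rw [hA1, hD0] at this
      simp only [ContinuousLinearMap.one_apply, ContinuousLinearMap.zero_apply,
        map_zero, add_zero] at this
      simp only [ContinuousLinearMap.sub_apply, ContinuousLinearMap.comp_apply]
      rw [eq_sub_iff_add_eq]
      exact this
    · -- A = 1, D = 1 : P = 1
      right
      have hB0 : ∀ y, B y = 0 := by
        intro y
        have := id2 y
        rw [hA1, hD1] at this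
        simp only [ContinuousLinearMap.one_apply] at this
        have h' : B y + B y = B y := this
        exact add_eq_right.mp h' 
      ext v
      rw [hPQ]
      have : Qc (e v) = e v := by
        have h1 : e v = ((e v).1, (e v).2) := rfl
        rw [h1, hQblock, hA1, hD1, hB0, hC0]
        simp
      rw [this]
      simp
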